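/- For every integer k ≥ 2, Σ_{i=1}^{k−1} (−1)^{i} C(k−1, i) (k+i−1)!/i! = (k−1)! · ((−1)^{k−1} − 1). -/

import Mathlib

open Finset

lemma inner_alt (n b : ℕ) (hb : b ≤ n) :
    ∑ i ∈ Finset.range (n + 1), (-1 : ℚ) ^ i * (n.choose i : ℚ) * (i.choose b : ℚ)
      = if b = n then (-1 : ℚ) ^ n else 0 := by
  have h1 : ∑ i ∈ Finset.range (n + 1), (-1 : ℚ) ^ i * (n.choose i : ℚ) * (i.choose b : ℚ)
      = ∑ i ∈ Finset.Ico b (n + 1), (-1 : ℚ) ^ i * (n.choose i : ℚ) * (i.choose b : ℚ) := by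
    refine (Finset.sum_subset ?_ ?_).symm
    · intro x hx; simp only [Finset.mem_Ico, Finset.mem_range] at *; omega
    · intro x hx hx'
      simp only [Finset.mem_Ico, Finset.mem_range] at hx hx'
      have : x < b := by omega
      rw [Nat.choose_eq_zero_of_lt this]; simp
  rw [h1, Finset.sum_Ico_eq_sum_range]
  have hnb : n + 1 - b = n - b + 1 := by omega
  rw [hnb]
  have h2 : ∀ t ∈ Finset.range (n - b + 1),
      (-1 : ℚ) ^ (b + t) * (n.choose (b + t) : ℚ) * ((b + t).choose b : ℚ)
        = (-1 : ℚ) ^ b * (n.choose b : ℚ) * ((-1 : ℚ) ^ t * ((n - b).choose t : ℚ)) := by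
    intro t ht
    simp only [Finset.mem_range] at ht
    have hbt : b + t ≤ n := by omega
    have hc := Nat.choose_mul (n := n) (Nat.le_add_right b t)
    rw [Nat.add_sub_cancel_left] at hc
    have : (n.choose (b + t) : ℚ) * ((b + t).choose b : ℚ)
        = (n.choose b : ℚ) * ((n - b).choose t : ℚ) := by exact_mod_cast congrArg Nat.cast hc
    rw [pow_add]
    linear_combination ((-1 : ℚ) ^ b * (-1 : ℚ) ^ t) * this
  rw [Finset.sum_congr rfl h2, ← Finset.mul_sum]
  have h3 : ∑ t ∈ Finset.range (n - b + 1), (-1 : ℚ) ^ t * ((n - b).choose t : ℚ)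
      = if n - b = 0 then 1 else 0 := by
    have hz : ∑ t ∈ Finset.range (n - b + 1), (-1 : ℚ) ^ t * ((n - b).choose t : ℚ)
        = ((∑ t ∈ Finset.range (n - b + 1), (-1 : ℤ) ^ t * ((n - b).choose t : ℤ) : ℤ) : ℚ) := by
      push_cast; rfl
    rw [hz, Int.alternating_sum_range_choose]
    split <;> simp
  rw [h3]
  by_cases hbn : b = n
  · subst hbn; simp
  · have : n - b ≠ 0 := by omega
    simp [this, hbn]

lemma key_alt (n : ℕ) :
    ∑ i ∈ Finset.range (n + 1), (-1 : ℚ) ^ i * (n.choose i : ℚ) * ((n + i).choose n : ℚ)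
      = (-1 : ℚ) ^ n := by
  have hv : ∀ i : ℕ, ((n + i).choose n : ℚ)
      = ∑ ij ∈ Finset.HasAntidiagonal.antidiagonal n, (n.choose ij.1 : ℚ) * (i.choose ij.2 : ℚ) := by
    intro i
    rw [Nat.add_choose_eq]
    push_cast
    rfl
  calc ∑ i ∈ Finset.range (n + 1), (-1 : ℚ) ^ i * (n.choose i : ℚ) * ((n + i).choose n : ℚ)
      = ∑ i ∈ Finset.range (n + 1), ∑ ij ∈ Finset.HasAntidiagonal.antidiagonal n,
          (n.choose ij.1 : ℚ) * ((-1 : ℚ) ^ i * (n.choose i : ℚ) * (i.choose ij.2 : ℚ)) := by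
        refine Finset.sum_congr rfl fun i _ => ?_
        rw [hv i, Finset.mul_sum]
        exact Finset.sum_congr rfl fun ij _ => by ring
    _ = ∑ ij ∈ Finset.HasAntidiagonal.antidiagonal n, (n.choose ij.1 : ℚ) *
          ∑ i ∈ Finset.range (n + 1), (-1 : ℚ) ^ i * (n.choose i : ℚ) * (i.choose ij.2 : ℚ) := by
        rw [Finset.sum_comm]
        exact Finset.sum_congr rfl fun ij _ => (Finset.mul_sum _ _ _).symm
    _ = (-1 : ℚ) ^ n := by
        rw [Finset.sum_eq_single (0, n)]
        · rw [inner_alt n n le_rfl]; simp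
        · intro ij hij hne
          rw [Finset.HasAntidiagonal.mem_antidiagonal] at hij
          have h2 : ij.2 ≠ n := by
            intro h; apply hne
            have : ij.1 = 0 := by omega
            exact Prod.ext this h
          have hle : ij.2 ≤ n := by omega
          rw [inner_alt n ij.2 hle, if_neg h2, mul_zero]
        · intro h; exact absurd (by simp : (0, n) ∈ Finset.HasAntidiagonal.antidiagonal n) h

/-- For `k ≥ 2`,
`∑_{i=1}^{k-1} (-1)^i C(k-1,i) (k+i-1)!/i! = (k-1)!((-1)^{k-1} - 1)`. -/
theorem alternating_binomial_sum_diag (k : ℕ) (hk : 2 ≤ k) :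
    ∑ i ∈ Finset.Icc 1 (k - 1),
        (-1 : ℚ) ^ i * ((k - 1).choose i : ℚ)
          * (((k + i - 1).factorial : ℚ) / (i.factorial : ℚ))
      = ((k - 1).factorial : ℚ) * ((-1 : ℚ) ^ (k - 1) - 1) := by
  obtain ⟨n, rfl⟩ : ∃ n, k = n + 1 := ⟨k - 1, by omega⟩
  simp only [Nat.add_sub_cancel]
  have hterm : ∀ i ∈ Finset.Icc 1 n,
      (-1 : ℚ) ^ i * (n.choose i : ℚ) * (((n + 1 + i - 1).factorial : ℚ) / (i.factorial : ℚ))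
        = (n.factorial : ℚ) * ((-1 : ℚ) ^ i * (n.choose i : ℚ) * ((n + i).choose n : ℚ)) := by
    intro i _
    have h1 : n + 1 + i - 1 = n + i := by omega
    have h2 := Nat.choose_mul_factorial_mul_factorial (Nat.le_add_right n i)
    rw [Nat.add_sub_cancel_left] at h2
    have h2' : (((n + i).choose n : ℚ)) * (n.factorial : ℚ) * (i.factorial : ℚ)
        = ((n + i).factorial : ℚ) := by exact_mod_cast h2
    have hi : (i.factorial : ℚ) ≠ 0 := by positivity
    rw [h1, ← h2']
    field_simp
  rw [Finset.sum_congr rfl hterm, ← Finset.mul_sum]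
  have hsplit : Finset.range (n + 1) = insert 0 (Finset.Icc 1 n) := by
    ext x; simp [Finset.mem_range, Finset.mem_Icc]; omega
  have hkey := key_alt n
  rw [hsplit, Finset.sum_insert (by simp)] at hkey
  simp only [pow_zero, Nat.choose_zero_right, Nat.add_zero, Nat.choose_self,
    Nat.cast_one, one_mul, mul_one] at hkey
  have : ∑ i ∈ Finset.Icc 1 n, (-1 : ℚ) ^ i * (n.choose i : ℚ) * ((n + i).choose n : ℚ)
      = (-1 : ℚ) ^ n - 1 := by linarith
  rw [this]
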